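/- Let p be an odd prime such that the Pisano period l_p equals 2p+2 and β(p) = 2. Then the cyclic code C = ⟨f(x)⟩ of length 2p+2 over F_p generated by the Fibonacci polynomial f(x) has parameters [2p+2, 2, 2p] and meets the Griesmer bound with equality: its length satisfies n = Σ_{i=0}^{k−1} ⌈d/p^i⌉, i.e. 2p+2 = ⌈2p⌉ + ⌈2p/p⌉; hence C is an optimal code. -/

import Mathlib

open Polynomial

/-- The Fibonacci sequence over `ZMod p`: `F 0 = 0`, `F 1 = 1`, `F (n+2) = F (n+1) + F n`. -/
def fibMod (p : ℕ) : ℕ → ZMod p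
  | 0 => 0
  | 1 => 1
  | n + 2 => fibMod p (n + 1) + fibMod p n

/-- The Pisano period of `p`: the least `t > 0` with `F t = F 0 = 0` and `F (t+1) = F 1 = 1`. -/
noncomputable def pisano (p : ℕ) : ℕ :=
  sInf {t : ℕ | 0 < t ∧ fibMod p t = 0 ∧ fibMod p (t + 1) = 1}

/-- `β(p)`: the number of indices `0 ≤ i < l_p` with `F i = 0` in `ZMod p`. -/
noncomputable def betaP (p : ℕ) : ℕ :=
  ((Finset.range (pisano p)).filter fun i => fibMod p i = 0).card

/-- The Fibonacci polynomial `f(x) = ∑_{i=0}^{l_p - 1} F_i x^i` over `ZMod p`. -/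
noncomputable def fibPoly (p : ℕ) : (ZMod p)[X] :=
  ∑ i ∈ Finset.range (pisano p), C (fibMod p i) * X ^ i

/-- Cyclic shift of a vector of length `l`: the shift `v ↦ (v_{l-1}, v_0, …, v_{l-2})`,
which corresponds to multiplication by `x` modulo `x^l - 1` on coefficient vectors. -/
def cyclicShift (p l : ℕ) (v : Fin l → ZMod p) : Fin l → ZMod p :=
  fun i => v ⟨((i : ℕ) + (l - 1)) % l, Nat.mod_lt _ i.pos⟩

/-- The coefficient vector of length `l` of a polynomial. -/
def polyVec (p l : ℕ) (g : (ZMod p)[X]) : Fin l → ZMod p := fun i => g.coeff i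

/-- The cyclic code of length `l` generated by `g`: the ideal generated by the image of `g`
in `F_p[x]/(x^l - 1)`, identified with the subspace of `F_p^l` of coefficient vectors via
`a_0 + a_1 x + ⋯ + a_{l-1} x^{l-1} ↦ (a_0, …, a_{l-1})`; equivalently (since multiplication
by `x` is the cyclic shift), the `F_p`-span of all cyclic shifts of the coefficient vector
of `g`. -/
noncomputable def cyclicCode (p l : ℕ) (g : (ZMod p)[X]) :
    Submodule (ZMod p) (Fin l → ZMod p) :=
  Submodule.span (ZMod p) {w | ∃ k : ℕ, w = (cyclicShift p l)^[k] (polyVec p l g)}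

/-- The cyclic code of length `l` generated by the Fibonacci polynomial `f(x)`. -/
noncomputable def fibCode (p l : ℕ) : Submodule (ZMod p) (Fin l → ZMod p) :=
  cyclicCode p l (fibPoly p)

open Finset

section
variable (p : ℕ)

lemma fibm_two (n : ℕ) : fibMod p (n+2) = fibMod p (n+1) + fibMod p n := rfl

lemma fib_sol (G : ℕ → ZMod p) (hG : ∀ n, G (n+2) = G (n+1) + G n) (n : ℕ) :
    G n = G 0 * (fibMod p (n+1) - fibMod p n) + G 1 * fibMod p n := by
  induction n using Nat.twoStepInduction with
  | zero => simp [fibMod]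
  | one => simp [fibMod]
  | more n ih1 ih2 =>
    rw [hG n, ih1, ih2, show n+1+1 = n+2 from rfl, show n+2+1=n+3 from rfl,
      show fibMod p (n+3) = fibMod p (n+2) + fibMod p (n+1) from rfl,
      show fibMod p (n+2) = fibMod p (n+1) + fibMod p n from rfl]
    ring

lemma fib_add (m n : ℕ) :
    fibMod p (n + m) = fibMod p m * (fibMod p (n+1) - fibMod p n)
      + fibMod p (m+1) * fibMod p n := by
  have := fib_sol p (fun n => fibMod p (n + m)) (fun k => by
    simpa [Nat.add_right_comm] using fibm_two p (k + m)) n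
  simpa [Nat.add_comm 1 m] using this

lemma pisano_mem (hl : pisano p = 2 * p + 2) :
    fibMod p (2*p+2) = 0 ∧ fibMod p (2*p+2+1) = 1 := by
  have hp : sInf {t : ℕ | 0 < t ∧ fibMod p t = 0 ∧ fibMod p (t + 1) = 1} = 2*p+2 := hl
  have hne : {t : ℕ | 0 < t ∧ fibMod p t = 0 ∧ fibMod p (t + 1) = 1}.Nonempty := by
    by_contra h
    rw [Set.not_nonempty_iff_eq_empty] at h
    rw [h, Nat.sInf_empty] at hp
    omega
  have := Nat.sInf_mem hne
  rw [hp] at this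
  exact ⟨this.2.1, this.2.2⟩

lemma pisano_min (hl : pisano p = 2 * p + 2) (t : ℕ)
    (h1 : 0 < t) (h2 : fibMod p t = 0) (h3 : fibMod p (t+1) = 1) :
    2*p+2 ≤ t := by
  have hp : sInf {t : ℕ | 0 < t ∧ fibMod p t = 0 ∧ fibMod p (t + 1) = 1} = 2*p+2 := hl
  exact le_of_eq_of_le hp.symm (Nat.sInf_le ⟨h1, h2, h3⟩)

/-- one-period shift -/
lemma fib_period (hl : pisano p = 2 * p + 2) (n : ℕ) : fibMod p (n + (2*p+2)) = fibMod p n := by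
  rw [fib_add p (2*p+2) n, (pisano_mem p hl).1, (pisano_mem p hl).2]
  ring

lemma fib_period_mul (hl : pisano p = 2 * p + 2) (q n : ℕ) : fibMod p (n + (2*p+2) * q) = fibMod p n := by
  induction q with
  | zero => simp
  | succ q ih => rw [Nat.mul_succ, ← Nat.add_assoc, fib_period p hl, ih]

lemma fib_mod (hl : pisano p = 2 * p + 2) (n : ℕ) : fibMod p (n % (2*p+2)) = fibMod p n := by
  conv_rhs => rw [← Nat.mod_add_div n (2*p+2), fib_period_mul p hl]


noncomputable def alphaP (p : ℕ) : ℕ := sInf {t : ℕ | 0 < t ∧ fibMod p t = 0}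

variable [Fact p.Prime]

lemma alpha_spec (hl : pisano p = 2 * p + 2) :
    0 < alphaP p ∧ fibMod p (alphaP p) = 0 :=
  Nat.sInf_mem (⟨2*p+2, by omega, (pisano_mem p hl).1⟩ : {t : ℕ | 0 < t ∧ fibMod p t = 0}.Nonempty)

lemma alpha_min (t : ℕ) (h1 : 0 < t) (h2 : fibMod p t = 0) : alphaP p ≤ t :=
  Nat.sInf_le ⟨h1, h2⟩

lemma fib_shift_alpha (hl : pisano p = 2 * p + 2) (n : ℕ) :
    fibMod p (n + alphaP p) = fibMod p (alphaP p + 1) * fibMod p n := by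
  rw [fib_add p (alphaP p) n, (alpha_spec p hl).2]
  ring

lemma alpha_succ_ne (hl : pisano p = 2 * p + 2) : fibMod p (alphaP p + 1) ≠ 0 := by
  intro h
  have hz : ∀ k, fibMod p (k + alphaP p) = 0 := fun k => by
    rw [fib_shift_alpha p hl, h, zero_mul]
  have hle : alphaP p ≤ 2*p+2 := alpha_min p _ (by omega) (pisano_mem p hl).1
  have := hz (2*p+3 - alphaP p)
  rw [show 2*p+3 - alphaP p + alphaP p = 2*p+2+1 by omega] at this
  rw [(pisano_mem p hl).2] at this
  exact one_ne_zero this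

lemma fib_zero_iff (hl : pisano p = 2 * p + 2) (n : ℕ) :
    fibMod p n = 0 ↔ alphaP p ∣ n := by
  constructor
  · intro hn
    induction n using Nat.strong_induction_on with
    | _ n ih =>
      rcases Nat.eq_zero_or_pos n with h0 | h0
      · simp [h0]
      · have hle : alphaP p ≤ n := alpha_min p n h0 hn
        have heq : fibMod p n = fibMod p (alphaP p + 1) * fibMod p (n - alphaP p) := by
          rw [← fib_shift_alpha p hl, Nat.sub_add_cancel hle]
        rw [heq] at hn
        have h2 : fibMod p (n - alphaP p) = 0 :=
          (mul_eq_zero.mp hn).resolve_left (alpha_succ_ne p hl)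
        have h3 : alphaP p ∣ n - alphaP p :=
          ih (n - alphaP p) (by have := (alpha_spec p hl).1; omega) h2
        have : n = (n - alphaP p) + alphaP p := by omega
        rw [this]
        exact Nat.dvd_add h3 dvd_rfl
  · rintro ⟨q, rfl⟩
    induction q with
    | zero => simp [fibMod]
    | succ q ih =>
      rw [Nat.mul_succ, fib_shift_alpha p hl, ih, mul_zero]

lemma card_mult (a m : ℕ) (ha : 0 < a) : ((range (a*m)).filter (a ∣ ·)).card = m := by
  have : (range (a*m)).filter (a ∣ ·) = (range m).image (a * ·) := by
    ext x
    simp only [mem_filter, mem_range, mem_image]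
    constructor
    · rintro ⟨hx, q, rfl⟩
      exact ⟨q, by exact (Nat.mul_lt_mul_left ha).mp hx, rfl⟩
    · rintro ⟨q, hq, rfl⟩
      exact ⟨(Nat.mul_lt_mul_left ha).mpr hq, q, rfl⟩
  rw [this, Finset.card_image_of_injective _ (fun x y h => by
    exact Nat.eq_of_mul_eq_mul_left ha h), Finset.card_range]

lemma alpha_eq (hl : pisano p = 2 * p + 2) (hb : betaP p = 2) : alphaP p = p + 1 := by
  have hd : alphaP p ∣ 2*p+2 := (fib_zero_iff p hl _).mp (pisano_mem p hl).1
  obtain ⟨m, hm⟩ := hd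
  have hpos := (alpha_spec p hl).1
  have hcard : ((range (2*p+2)).filter fun i => fibMod p i = 0).card = 2 := by
    rw [← hl]; exact hb
  have hfe : ((range (2*p+2)).filter fun i => fibMod p i = 0)
      = (range (2*p+2)).filter (alphaP p ∣ ·) := by
    apply Finset.filter_congr
    intro x _
    simpa using fib_zero_iff p hl x
  rw [hfe, hm, card_mult (alphaP p) m hpos] at hcard
  subst hcard
  omega

lemma fib_alpha (hl : pisano p = 2 * p + 2) (hb : betaP p = 2) :
    fibMod p (p + 1) = 0 := by
  have := (alpha_spec p hl).2
  rwa [alpha_eq p hl hb] at this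

lemma fib_anti (hl : pisano p = 2 * p + 2) (hb : betaP p = 2) (n : ℕ) :
    fibMod p (n + (p+1)) = - fibMod p n := by
  have ha := alpha_eq p hl hb
  have hsh : ∀ n, fibMod p (n + (p+1)) = fibMod p (p+2) * fibMod p n := by
    intro n
    have := fib_shift_alpha p hl n
    rwa [ha, show p+1+1 = p+2 from rfl] at this
  have hcc : fibMod p (p+2) * fibMod p (p+2) = 1 := by
    have h1 := hsh (p+2)
    rw [show p+2+(p+1) = 2*p+2+1 by omega, (pisano_mem p hl).2] at h1
    exact h1.symm
  rcases mul_self_eq_one_iff.mp hcc with h1 | h1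
  · exfalso
    have := pisano_min p hl (p+1) (by omega) (fib_alpha p hl hb) (h1 ▸ rfl)
    omega
  · rw [hsh, h1]; ring

end

section
variable (p : ℕ)

lemma card_fin_filter (l : ℕ) (P : ℕ → Prop) [DecidablePred P] :
    ((Finset.univ : Finset (Fin l)).filter (fun i => P i.val)).card
      = ((range l).filter P).card := by
  apply Finset.card_bij (fun a _ => a.val)
  · intro a ha
    simp only [mem_filter, mem_univ, true_and] at ha
    simp only [mem_filter, mem_range]
    exact ⟨a.isLt, ha⟩
  · intro a _ b _ h; exact Fin.ext h
  · intro b hb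
    simp only [mem_filter, mem_range] at hb
    exact ⟨⟨b, hb.1⟩, by simp only [mem_filter, mem_univ, true_and]; exact hb.2, rfl⟩

lemma polyVec_eq (hl : pisano p = 2*p+2) (i : Fin (2*p+2)) :
    polyVec p (2*p+2) (fibPoly p) i = fibMod p i := by
  simp only [polyVec, fibPoly, hl, Polynomial.finset_sum_coeff, Polynomial.coeff_C_mul,
    Polynomial.coeff_X_pow]
  rw [Finset.sum_eq_single i.val]
  · simp
  · intro b _ hb; simp [Ne.symm hb]
  · intro h; exact absurd (Finset.mem_range.mpr i.isLt) h

noncomputable def Wv (p k : ℕ) : Fin (2*p+2) → ZMod p :=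
  fun i => fibMod p (i.val + k * (2*p+1))

lemma fib_mod_add (hl : pisano p = 2*p+2) (a b : ℕ) :
    fibMod p (a % (2*p+2) + b) = fibMod p (a + b) := by
  conv_rhs => rw [← Nat.mod_add_div a (2*p+2)]
  rw [show a % (2*p+2) + (2*p+2) * (a / (2*p+2)) + b
      = (a % (2*p+2) + b) + (2*p+2) * (a / (2*p+2)) by ring]
  rw [fib_period_mul p hl]

lemma shift_iter (hl : pisano p = 2*p+2) (k : ℕ) :
    (cyclicShift p (2*p+2))^[k] (polyVec p (2*p+2) (fibPoly p)) = Wv p k := by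
  induction k with
  | zero =>
    funext i
    simp only [Function.iterate_zero, id_eq, Wv, Nat.zero_mul, Nat.add_zero]
    exact polyVec_eq p hl i
  | succ k ih =>
    rw [Function.iterate_succ_apply', ih]
    funext i
    simp only [cyclicShift, Wv]
    rw [show 2*p+2-1 = 2*p+1 by omega, fib_mod_add p hl]
    congr 1
    ring

lemma Wv_rec (hl : pisano p = 2*p+2) (k : ℕ) :
    Wv p (k+2) = Wv p k - Wv p (k+1) := by
  funext i
  simp only [Wv, Pi.sub_apply]
  set m := i.val + k*(2*p+1) with hm
  have e1 : fibMod p (m + (4*p+2) + 2)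
      = fibMod p (m + (4*p+2) + 1) + fibMod p (m + (4*p+2)) := fibm_two p (m + (4*p+2))
  have e2 : fibMod p (m + (4*p+2) + 2) = fibMod p m := by
    rw [show m + (4*p+2) + 2 = m + (2*p+2)*2 by ring]
    exact fib_period_mul p hl 2 m
  have e3 : fibMod p (m + (4*p+2) + 1) = fibMod p (m + (2*p+1)) := by
    rw [show m + (4*p+2) + 1 = (m + (2*p+1)) + (2*p+2) by ring]
    exact fib_period p hl _
  have e4 : i.val + (k+2)*(2*p+1) = m + (4*p+2) := by rw [hm]; ring
  have e5 : i.val + (k+1)*(2*p+1) = m + (2*p+1) := by rw [hm]; ring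
  rw [e4, e5]
  rw [e2, e3] at e1
  linear_combination -e1

lemma code_eq (hl : pisano p = 2*p+2) :
    fibCode p (2*p+2) = Submodule.span (ZMod p) {Wv p 0, Wv p 1} := by
  apply le_antisymm
  · rw [fibCode, cyclicCode, Submodule.span_le]
    rintro w ⟨k, rfl⟩
    rw [shift_iter p hl]
    induction k using Nat.twoStepInduction with
    | zero => exact Submodule.subset_span (Set.mem_insert _ _)
    | one => exact Submodule.subset_span (Set.mem_insert_of_mem _ rfl)
    | more k ih1 ih2 =>
      rw [Wv_rec p hl k]
      exact Submodule.sub_mem _ ih1 ih2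
  · rw [Submodule.span_le]
    rintro w (rfl | rfl)
    · exact Submodule.subset_span ⟨0, (shift_iter p hl 0).symm⟩
    · exact Submodule.subset_span ⟨1, (shift_iter p hl 1).symm⟩

variable [Fact p.Prime]

lemma fib_top (hl : pisano p = 2*p+2) : fibMod p (2*p+1) = 1 := by
  have h := fibm_two p (2*p+1)
  rw [show 2*p+1+2 = 2*p+2+1 by omega, show 2*p+1+1 = 2*p+2 by omega,
    (pisano_mem p hl).1, (pisano_mem p hl).2] at h
  rw [zero_add] at h
  exact h.symm

lemma W_indep (hl : pisano p = 2*p+2) :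
    LinearIndependent (ZMod p) ![Wv p 0, Wv p 1] := by
  rw [LinearIndependent.pair_iff]
  intro s t h
  have h0 := congrFun h ⟨0, by omega⟩
  have h1 := congrFun h ⟨1, by omega⟩
  simp only [Wv, Pi.add_apply, Pi.smul_apply, Pi.zero_apply, smul_eq_mul] at h0 h1
  norm_num at h0 h1
  rw [show 1 + (2*p+1) = 2*p+2 by omega, (pisano_mem p hl).1,
    show fibMod p 1 = 1 from rfl] at h1
  rw [fib_top p hl, show fibMod p 0 = 0 from rfl] at h0
  constructor
  · simpa using h1
  · simpa using h0

lemma code_rank (hl : pisano p = 2*p+2) :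
    Module.finrank (ZMod p) (fibCode p (2*p+2)) = 2 := by
  rw [code_eq p hl]
  have : ({Wv p 0, Wv p 1} : Set (Fin (2*p+2) → ZMod p)) = Set.range ![Wv p 0, Wv p 1] := by
    simp only [Matrix.range_cons, Matrix.range_empty, Set.union_empty,
      Set.union_singleton]
    exact Set.pair_comm _ _
  rw [this, finrank_span_eq_card (W_indep p hl)]
  simp

end

section
variable (p : ℕ) [Fact p.Prime]

lemma G_zeros (hl : pisano p = 2*p+2) (hb : betaP p = 2) (a b : ZMod p)
    (hne : ∃ i : Fin (2*p+2), a * fibMod p (i.val) + b * fibMod p (i.val + (2*p+1)) ≠ 0) :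
    ((Finset.univ : Finset (Fin (2*p+2))).filter
      (fun i => a * fibMod p i.val + b * fibMod p (i.val + (2*p+1)) = 0)).card ≤ 2 := by
  set G : ℕ → ZMod p := fun n => a * fibMod p n + b * fibMod p (n + (2*p+1)) with hG
  have hrec : ∀ n, G (n+2) = G (n+1) + G n := by
    intro n
    simp only [hG]
    rw [show n+2+(2*p+1) = (n+(2*p+1))+2 by omega, show n+1+(2*p+1) = (n+(2*p+1))+1 by omega,
      fibm_two p n, fibm_two p (n+(2*p+1))]
    ring
  have hper : ∀ q n, G (n + (2*p+2)*q) = G n := by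
    intro q n
    simp only [hG]
    rw [show n + (2*p+2)*q + (2*p+1) = (n + (2*p+1)) + (2*p+2)*q by ring,
      fib_period_mul p hl, fib_period_mul p hl]
  have hnz : ∃ i, G i ≠ 0 := by
    obtain ⟨i, hi⟩ := hne
    exact ⟨i.val, hi⟩
  have hsol : ∀ m k, G (m + k) = G m * (fibMod p (k+1) - fibMod p k) + G (m+1) * fibMod p k := by
    intro m k
    have := fib_sol p (fun k => G (m+k)) (fun j => by
      show G (m+(j+2)) = G (m+(j+1)) + G (m+j)
      rw [show m+(j+2) = (m+j)+2 by omega, show m+(j+1) = (m+j)+1 by omega]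
      exact hrec (m+j)) k
    simpa using this
  have hcons : ∀ m, G m = 0 → G (m+1) ≠ 0 := by
    intro m h0 h1
    have hall : ∀ k, G (m + k) = 0 := by
      intro k
      rw [hsol m k, h0, h1, zero_mul, zero_mul, add_zero]
    obtain ⟨i, hiz⟩ := hnz
    apply hiz
    have hle : m ≤ (2*p+2)*m := Nat.le_mul_of_pos_left m (by omega)
    have h2 : i + (2*p+2)*m = m + (i + (2*p+2)*m - m) := by omega
    rw [← hper m i, h2]
    exact hall _
  have hcong : ∀ i j : ℕ, i ≤ j → G i = 0 → G j = 0 → (p+1) ∣ (j - i) := by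
    intro i j hij h0 h1
    have hc := hcons i h0
    have := hsol i (j - i)
    rw [Nat.add_sub_cancel' hij, h1, h0, zero_mul, zero_add] at this
    have hF : fibMod p (j - i) = 0 := by
      rcases mul_eq_zero.mp this.symm with h | h
      · exact absurd h hc
      · exact h
    have := (fib_zero_iff p hl _).mp hF
    rwa [alpha_eq p hl hb] at this
  calc ((Finset.univ : Finset (Fin (2*p+2))).filter (fun i => G i.val = 0)).card
      ≤ (range 2).card := by
        apply Finset.card_le_card_of_injOn (fun i : Fin (2*p+2) => i.val / (p+1))
        · intro x _
          simp only [coe_range, Set.mem_Iio, mem_range, mem_coe]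
          rw [Nat.div_lt_iff_lt_mul (by omega)]; have := x.isLt; omega
        · intro x hx y hy hxy
          simp only [coe_filter, Set.mem_setOf_eq] at hx hy
          have key : ∀ u v : Fin (2*p+2), u.val ≤ v.val → G u.val = 0 → G v.val = 0 →
              u.val/(p+1) = v.val/(p+1) → u = v := by
            intro u v huv hu hv hq
            obtain ⟨d, hd⟩ := hcong u.val v.val huv hu hv
            have hveq : v.val = u.val + (p+1)*d := by omega
            rw [hveq, Nat.add_mul_div_left _ _ (by omega : 0 < p+1)] at hq
            have hd0 : d = 0 := by omega
            rw [hd0, Nat.mul_zero] at hd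
            exact Fin.ext (by omega)
          rcases le_total x.val y.val with h | h
          · exact key x y h hx.2 hy.2 hxy
          · exact (key y x h hy.2 hx.2 hxy.symm).symm
    _ = 2 := by simp
end

section
variable (p : ℕ) [Fact p.Prime]

lemma min_dist_lb (hl : pisano p = 2*p+2) (hb : betaP p = 2) :
    ∀ u ∈ fibCode p (2*p+2), u ≠ 0 → 2*p ≤ hammingNorm u := by
  intro u hm hne
  rw [code_eq p hl] at hm
  obtain ⟨a, b, hab⟩ := Submodule.mem_span_pair.mp hm
  have hui : ∀ i : Fin (2*p+2), u i = a * fibMod p i.val + b * fibMod p (i.val + (2*p+1)) := by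
    intro i
    rw [← hab]
    simp only [Pi.add_apply, Pi.smul_apply, smul_eq_mul, Wv]
    norm_num
  have hnz : ∃ i : Fin (2*p+2), a * fibMod p i.val + b * fibMod p (i.val + (2*p+1)) ≠ 0 := by
    by_contra h
    push_neg at h
    apply hne
    funext i
    rw [hui i, h i]
    rfl
  have hcard := G_zeros p hl hb a b hnz
  have hsplit := Finset.card_filter_add_card_filter_not
    (s := (Finset.univ : Finset (Fin (2*p+2)))) (fun i => u i = 0)
  have hcu : (Finset.univ : Finset (Fin (2*p+2))).card = 2*p+2 := by simp
  have heq : ((Finset.univ : Finset (Fin (2*p+2))).filter (fun i => u i = 0)).card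
      = ((Finset.univ : Finset (Fin (2*p+2))).filter
        (fun i => a * fibMod p i.val + b * fibMod p (i.val + (2*p+1)) = 0)).card := by
    congr 1
    apply Finset.filter_congr
    intro i _
    rw [hui i]
  have hnorm : hammingNorm u
      = ((Finset.univ : Finset (Fin (2*p+2))).filter (fun i => ¬ u i = 0)).card := rfl
  omega

lemma weight_v (hl : pisano p = 2*p+2) (hb : betaP p = 2) :
    hammingNorm (polyVec p (2*p+2) (fibPoly p)) = 2*p := by
  have hz : ((Finset.univ : Finset (Fin (2*p+2))).filter
      (fun i => polyVec p (2*p+2) (fibPoly p) i = 0)).card = 2 := by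
    have heq : ((Finset.univ : Finset (Fin (2*p+2))).filter
        (fun i => polyVec p (2*p+2) (fibPoly p) i = 0)).card
        = ((Finset.univ : Finset (Fin (2*p+2))).filter (fun i => fibMod p i.val = 0)).card := by
      congr 1
      apply Finset.filter_congr
      intro i _
      rw [polyVec_eq p hl i]
    rw [heq, card_fin_filter (2*p+2) (fun n => fibMod p n = 0)]
    rw [← hl]
    exact hb
  have hsplit := Finset.card_filter_add_card_filter_not
    (s := (Finset.univ : Finset (Fin (2*p+2)))) (fun i => polyVec p (2*p+2) (fibPoly p) i = 0)
  have hcu : (Finset.univ : Finset (Fin (2*p+2))).card = 2*p+2 := by simp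
  have hnorm : hammingNorm (polyVec p (2*p+2) (fibPoly p))
      = ((Finset.univ : Finset (Fin (2*p+2))).filter
        (fun i => ¬ polyVec p (2*p+2) (fibPoly p) i = 0)).card := rfl
  omega

end

/-- For an odd prime `p` with Pisano period `l_p = 2p + 2` and `β(p) = 2`,
the cyclic code `C = ⟨f(x)⟩` has parameters `[2p+2, 2, 2p]` and meets the Griesmer bound
with equality: `2p + 2 = ⌈2p/p⁰⌉ + ⌈2p/p¹⌉`; hence `C` is an optimal code. -/
theorem fibCode_optimal (p : ℕ) [Fact p.Prime] (hodd : Odd p)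
    (hl : pisano p = 2 * p + 2) (hb : betaP p = 2) :
    Module.finrank (ZMod p) (fibCode p (2 * p + 2)) = 2 ∧
      IsLeast {w : ℕ | ∃ v ∈ fibCode p (2 * p + 2), v ≠ 0 ∧ hammingNorm v = w} (2 * p) ∧
      ((2 * p + 2 : ℤ) = ∑ i ∈ Finset.range 2, ⌈(2 * p : ℚ) / (p : ℚ) ^ i⌉) := by
  have hp2 : 2 ≤ p := (Fact.out : p.Prime).two_le
  refine ⟨code_rank p hl, ⟨?_, ?_⟩, ?_⟩
  · refine ⟨polyVec p (2*p+2) (fibPoly p), ?_, ?_, weight_v p hl hb⟩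
    · exact Submodule.subset_span ⟨0, rfl⟩
    · intro h
      have := congrFun h ⟨1, by omega⟩
      rw [polyVec_eq p hl ⟨1, by omega⟩] at this
      exact one_ne_zero this
  · rintro w ⟨v, hv, hvne, rfl⟩
    exact min_dist_lb p hl hb v hv hvne
  · rw [Finset.sum_range_succ, Finset.sum_range_one, pow_zero, pow_one, div_one]
    have h1 : ⌈2 * (p:ℚ)⌉ = 2 * (p:ℤ) := by
      exact_mod_cast Int.ceil_intCast (2 * (p:ℤ))
    have h2 : ⌈2 * (p:ℚ) / p⌉ = 2 := by
      rw [mul_div_assoc, div_self (by exact_mod_cast (by omega : p ≠ 0) : (p:ℚ) ≠ 0), mul_one]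
      exact_mod_cast Int.ceil_intCast 2
    rw [h1, h2]
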